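/- The map θ is a *-homomorphism: θ((∑ a_i λ_i)*) = θ(∑ a_i λ_i)*, where the adjoint in the crossed product is (a_i λ_i)* = α^{-i}(a_i*) λ_{-i} and the adjoint in M_n(A) is the conjugate transpose. -/

import Mathlib

theorem stmt_11 {A : Type*} [Ring A] [Algebra ℂ A] [StarRing A] [StarModule ℂ A]
    (n : ℕ) [NeZero n] (hn : 2 ≤ n)
    (α : A ≃ₐ[ℂ] A) (hα : α ^ n = 1)
    (hstar : ∀ x : A, α (star x) = star (α x))
    (ξ : ℂ) (hξ : IsPrimitiveRoot ξ n)
    (P : ZMod n → A → A)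
    (hP : ∀ k x, P k x = (n : ℂ)⁻¹ • ∑ p ∈ Finset.range n, (ξ ^ (k.val * p))⁻¹ • (α ^ p) x)
    (θ : (ZMod n → A) → Matrix (ZMod n) (ZMod n) A)
    (hθ : ∀ a k l, θ a k l = ∑ i : ZMod n, (ξ ^ (i.val * l.val))⁻¹ • P (l - k) (a i))
    (a : ZMod n → A) :
    θ (fun j => (α ^ j.val) (star (a (-j)))) = (θ a).conjTranspose := by
  ext k l
  rw [Matrix.conjTranspose_apply, hθ, hθ]
  -- basic facts
  have hξn : ξ ^ n = 1 := hξ.pow_eq_one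
  set f : ZMod n → ℂ := fun m => ξ ^ m.val with hf
  have hfnat : ∀ m : ℕ, ξ ^ m = f (m : ZMod n) := by
    intro m
    simp only [hf, ZMod.val_natCast]
    exact pow_eq_pow_mod m hξn
  have hval : ∀ x : ZMod n, ((x.val : ℕ) : ZMod n) = x := fun x => ZMod.natCast_rightInverse x
  have hfadd : ∀ x y : ZMod n, f (x + y) = f x * f y := by
    intro x y
    rw [← pow_add, hfnat]
    congr 1
    push_cast [hval]
    ring
  have hf0 : f 0 = 1 := by simp [hf]
  have hfinv : ∀ x : ZMod n, (f x)⁻¹ = f (-x) := by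
    intro x
    refine inv_eq_of_mul_eq_one_right ?_
    rw [← hfadd, add_neg_cancel, hf0]
  have habs : ‖ξ‖ = 1 := hξ.norm'_eq_one (NeZero.ne n)
  have hstarf : ∀ x : ZMod n, star (f x) = f (-x) := by
    intro x
    rw [← hfinv x]
    show (starRingEnd ℂ) (ξ ^ x.val) = (ξ ^ x.val)⁻¹
    rw [map_pow, ← Complex.inv_eq_conj habs, inv_pow]
  have hcoef : ∀ x y : ZMod n, (ξ ^ (x.val * y.val))⁻¹ = f (-(x * y)) := by
    intro x y
    rw [← hfinv]
    congr 1
    rw [hfnat]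
    congr 1
    push_cast [hval]
    ring
  have hαn : ∀ (m : ℕ) (x : A), (α ^ m) x = (α ^ ((m : ZMod n)).val) x := by
    intro m x
    rw [pow_eq_pow_mod m hα, ZMod.val_natCast]
  have hcomp : ∀ (p m : ℕ) (x : A), (α ^ p) ((α ^ m) x) = (α ^ (p + m)) x := by
    intro p m x
    rw [pow_add]
    rfl
  have hαstar : ∀ (m : ℕ) (x : A), (α ^ m) (star x) = star ((α ^ m) x) := by
    intro m
    induction m with
    | zero => intro x; simp
    | succ p ih =>
      intro x
      rw [pow_succ']
      show α ((α ^ p) (star x)) = star ((α * α ^ p) x)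
      rw [ih, hstar]
      rfl
  have hsum : ∀ (g : ℕ → A), ∑ p ∈ Finset.range n, g p = ∑ q : ZMod n, g q.val := by
    intro g
    refine Finset.sum_nbij' (fun p => (p : ZMod n)) (fun q => q.val) ?_ ?_ ?_ ?_ ?_
    · intro p _; exact Finset.mem_univ _
    · intro q _; exact Finset.mem_range.mpr (ZMod.val_lt q)
    · intro p hp; exact ZMod.val_cast_of_lt (Finset.mem_range.mp hp)
    · intro q _; exact hval q
    · intro p hp; rw [ZMod.val_natCast, Nat.mod_eq_of_lt (Finset.mem_range.mp hp)]
  trans ((n:ℂ)⁻¹ • ∑ j : ZMod n, ∑ q : ZMod n,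
      f (-(j*l) + -((l-k)*q)) • (α ^ ((q + j : ZMod n)).val) (star (a (-j))))
  · rw [Finset.smul_sum]
    refine Finset.sum_congr rfl fun j _ => ?_
    rw [hP, hcoef j l, hsum, smul_comm (f (-(j*l))) ((n:ℂ)⁻¹)]
    congr 1
    rw [Finset.smul_sum]
    refine Finset.sum_congr rfl fun q _ => ?_
    rw [hcoef (l-k) q, smul_smul, ← hfadd, hcomp, hαn,
      show ((q.val + j.val : ℕ) : ZMod n) = q + j by push_cast [hval]; ring]
  trans ((n:ℂ)⁻¹ • ∑ i : ZMod n, ∑ q : ZMod n,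
      f (i*k + (k-l)*q) • (α ^ q.val) (star (a i)))
  · congr 1
    rw [← Equiv.sum_comp (Equiv.neg (ZMod n)) (fun j => ∑ q : ZMod n,
      f (-(j*l) + -((l-k)*q)) • (α ^ ((q + j : ZMod n)).val) (star (a (-j))))]
    refine Finset.sum_congr rfl fun i _ => ?_
    simp only [Equiv.neg_apply, neg_neg]
    refine (Finset.sum_congr rfl fun q _ => ?_).trans
      (Equiv.sum_comp (Equiv.addRight (-i))
        (fun q => f (i*k + (k-l)*q) • (α ^ q.val) (star (a i))))
    simp only [Equiv.coe_addRight]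
    congr 2
    ring
  · rw [star_sum, Finset.smul_sum]
    refine Finset.sum_congr rfl fun i _ => ?_
    rw [hP, hcoef i k, hsum, star_smul, hstarf, neg_neg, star_smul, star_sum,
      star_inv₀, star_natCast, smul_comm (f (i*k)) ((n:ℂ)⁻¹)]
    congr 1
    rw [Finset.smul_sum]
    refine Finset.sum_congr rfl fun q _ => ?_
    rw [hcoef (k-l) q, star_smul, hstarf, neg_neg, ← hαstar, smul_smul, ← hfadd]
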